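/- Suppose G ⊂ ℝⁿ is a domain with compact boundary such that ℝⁿ \ G has Lebesgue measure zero, and assume n − sp ∈ 𝒜(∂G), i.e. there is C>0 with ∫_{B(x,r)} dist(y,∂G)^{−sp} dy ≤ C r^{n−sp} for all x ∈ ∂G and r > 0, where 1 ≤ p < ∞ and 0 < s < n/p. Then there is a constant C' such that for every x ∈ ℝⁿ and every r > 0, (⨍_{B(x,r)} dist(y,∂G)^{−sp} dy)^{1/p} ≤ C' ⨍_{B(x,r)} dist(y,∂G)^{−s} dy. -/
import Mathlib


open MeasureTheory Metric Set
open scoped ENNReal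

noncomputable section

private lemma aux_anti {a b : ℝ≥0∞} (hab : a ≤ b) {t : ℝ} (ht : 0 ≤ t) :
    b ^ (-t) ≤ a ^ (-t) := by
  rw [ENNReal.rpow_neg, ENNReal.rpow_neg]
  exact ENNReal.inv_le_inv.2 (ENNReal.rpow_le_rpow hab ht)

private lemma aux_cancel {x : ℝ≥0∞} (hx0 : x ≠ 0) (hxt : x ≠ ⊤) (t : ℝ) :
    x ^ t * x ^ (-t) = 1 := by
  rw [← ENNReal.rpow_add _ _ hx0 hxt, add_neg_cancel, ENNReal.rpow_zero]

theorem stmt5 (n : ℕ) (s p : ℝ) (hp : 1 ≤ p) (hs : 0 < s) (hsn : s < n / p)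
    (G : Set (EuclideanSpace ℝ (Fin n))) (hGo : IsOpen G) (hGc : IsConnected G)
    (hfr : IsCompact (frontier G)) (hnull : volume Gᶜ = 0)
    (C : ℝ) (hC : 0 < C)
    (h : ∀ x ∈ frontier G, ∀ r : ℝ, 0 < r →
      ∫⁻ y in ball x r, (ENNReal.ofReal (infDist y (frontier G))) ^ (-(s * p)) ≤
        ENNReal.ofReal (C * r ^ ((n : ℝ) - s * p))) :
    ∃ C' : ℝ, 0 < C' ∧ ∀ (x : EuclideanSpace ℝ (Fin n)) (r : ℝ), 0 < r →
      ((volume (ball x r))⁻¹ *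
          ∫⁻ y in ball x r, (ENNReal.ofReal (infDist y (frontier G))) ^ (-(s * p))) ^ (1 / p)
        ≤ ENNReal.ofReal C' *
          ((volume (ball x r))⁻¹ *
            ∫⁻ y in ball x r, (ENNReal.ofReal (infDist y (frontier G))) ^ (-s)) := by
  classical
  set F := frontier G with hF
  have hp0 : 0 < p := lt_of_lt_of_le one_pos hp
  have hn : 0 < n := by
    have h1 : (0:ℝ) < (n:ℝ) / p := lt_trans hs hsn
    have h2 : (0:ℝ) < (n:ℝ) := by
      have := mul_pos h1 hp0
      rwa [div_mul_cancel₀ _ hp0.ne'] at this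
    exact_mod_cast h2
  haveI : Nontrivial (EuclideanSpace ℝ (Fin n)) :=
    Module.nontrivial_of_finrank_pos (R := ℝ) (by rw [finrank_euclideanSpace_fin]; omega)
  set ω := volume (ball (0 : EuclideanSpace ℝ (Fin n)) 1) with hω
  have hω0 : ω ≠ 0 := (measure_ball_pos volume _ one_pos).ne'
  have hωt : ω ≠ ⊤ := measure_ball_lt_top.ne
  set oR3 : ℝ≥0∞ := ENNReal.ofReal 3 with hoR3
  have h30 : oR3 ≠ 0 := by
    rw [hoR3]; exact (ENNReal.ofReal_pos.2 (by norm_num)).ne'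
  have h3t : oR3 ≠ ⊤ := ENNReal.ofReal_ne_top
  set K2 : ℝ≥0∞ := (ω⁻¹ * ENNReal.ofReal (C * 3 ^ ((n:ℝ) - s * p))) ^ (1/p) with hK2
  have hK2t : K2 ≠ ⊤ :=
    ENNReal.rpow_ne_top_of_nonneg (by positivity)
      (ENNReal.mul_ne_top (ENNReal.inv_ne_top.2 hω0) ENNReal.ofReal_ne_top)
  set K : ℝ≥0∞ := oR3 ^ s * max 1 K2 with hK
  have hKt : K ≠ ⊤ :=
    ENNReal.mul_ne_top (ENNReal.rpow_ne_top_of_nonneg hs.le h3t)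
      (max_lt ENNReal.one_lt_top hK2t.lt_top).ne
  have hK0 : K ≠ 0 :=
    mul_ne_zero (ENNReal.rpow_pos (ENNReal.ofReal_pos.2 (by norm_num)) h3t).ne'
      (lt_of_lt_of_le one_pos (le_max_left 1 K2)).ne'
  have hKs : oR3 ^ s ≤ K := by
    calc oR3 ^ s = oR3 ^ s * 1 := (mul_one _).symm
      _ ≤ K := mul_le_mul_right (le_max_left _ _) _
  refine ⟨K.toReal + 1, by positivity, ?_⟩
  intro x r hr
  have hV0 : volume (ball x r) ≠ 0 := (measure_ball_pos volume x hr).ne'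
  have hVt : volume (ball x r) ≠ ⊤ := measure_ball_lt_top.ne
  have hKle : K ≤ ENNReal.ofReal (K.toReal + 1) := by
    conv_lhs => rw [← ENNReal.ofReal_toReal hKt]
    exact ENNReal.ofReal_le_ofReal (by linarith)
  suffices hmain :
      ((volume (ball x r))⁻¹ *
          ∫⁻ y in ball x r, (ENNReal.ofReal (infDist y F)) ^ (-(s * p))) ^ (1 / p)
        ≤ K * ((volume (ball x r))⁻¹ *
            ∫⁻ y in ball x r, (ENNReal.ofReal (infDist y F)) ^ (-s)) by
    exact hmain.trans (mul_le_mul_left hKle _)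
  -- lower bound for the average of the (-s)-power
  have havg_lower : ∀ M : ℝ, (∀ y ∈ ball x r, infDist y F ≤ M) →
      (ENNReal.ofReal M) ^ (-s) ≤ (volume (ball x r))⁻¹ *
        ∫⁻ y in ball x r, (ENNReal.ofReal (infDist y F)) ^ (-s) := by
    intro M hM
    have hint : (ENNReal.ofReal M) ^ (-s) * volume (ball x r)
        ≤ ∫⁻ y in ball x r, (ENNReal.ofReal (infDist y F)) ^ (-s) := by
      rw [← setLIntegral_const]
      exact setLIntegral_mono' measurableSet_ball
        (fun y hy => aux_anti (ENNReal.ofReal_le_ofReal (hM y hy)) hs.le)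
    calc (ENNReal.ofReal M) ^ (-s)
        = (volume (ball x r))⁻¹ * ((ENNReal.ofReal M) ^ (-s) * volume (ball x r)) := by
          rw [mul_comm ((ENNReal.ofReal M) ^ (-s)) (volume (ball x r)), ← mul_assoc,
            ENNReal.inv_mul_cancel hV0 hVt, one_mul]
      _ ≤ _ := mul_le_mul_right hint _
  rcases eq_empty_or_nonempty F with hFe | hFne
  · -- empty boundary: right-hand side is ⊤
    have hg : ∀ y : EuclideanSpace ℝ (Fin n),
        (ENNReal.ofReal (infDist y F)) ^ (-s) = ⊤ := fun y => by
      rw [hFe, Metric.infDist_empty, ENNReal.ofReal_zero]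
      exact ENNReal.zero_rpow_of_neg (neg_lt_zero.2 hs)
    have : (volume (ball x r))⁻¹ *
        ∫⁻ y in ball x r, (ENNReal.ofReal (infDist y F)) ^ (-s) = ⊤ := by
      simp_rw [hg]
      rw [setLIntegral_const, ENNReal.top_mul hV0, ENNReal.mul_top (ENNReal.inv_ne_zero.2 hVt)]
    rw [this, ENNReal.mul_top hK0]
    exact le_top
  by_cases hcase : infDist x F ≤ 2 * r
  · -- near the boundary: use the hypothesis h
    obtain ⟨x₀, hx₀F, hx₀d⟩ := hfr.exists_infDist_eq_dist hFne x
    have hsub : ball x r ⊆ ball x₀ (3 * r) := by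
      intro y hy
      have h1 : dist y x₀ ≤ dist y x + dist x x₀ := dist_triangle _ _ _
      have h2 : dist y x < r := mem_ball.1 hy
      have h3 : dist x x₀ ≤ 2 * r := by rw [← hx₀d]; exact hcase
      exact mem_ball.2 (by linarith)
    have hIf : ∫⁻ y in ball x r, (ENNReal.ofReal (infDist y F)) ^ (-(s * p))
        ≤ ENNReal.ofReal (C * (3 * r) ^ ((n:ℝ) - s * p)) :=
      (lintegral_mono_set hsub).trans (h x₀ hx₀F (3 * r) (by linarith))
    set R : ℝ≥0∞ := ENNReal.ofReal r with hR
    have hR0 : R ≠ 0 := (ENNReal.ofReal_pos.2 hr).ne'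
    have hRt : R ≠ ⊤ := ENNReal.ofReal_ne_top
    have hball : volume (ball x r) = R ^ ((n:ℕ):ℝ) * ω := by
      rw [Measure.addHaar_ball volume x hr.le, finrank_euclideanSpace_fin,
        ENNReal.ofReal_pow hr.le, ← ENNReal.rpow_natCast]
    have harith : (volume (ball x r))⁻¹ * ENNReal.ofReal (C * (3 * r) ^ ((n:ℝ) - s * p))
        = ω⁻¹ * ENNReal.ofReal (C * 3 ^ ((n:ℝ) - s * p)) * R ^ (-(s * p)) := by
      have hRn0 : R ^ ((n:ℕ):ℝ) ≠ 0 := (ENNReal.rpow_pos (ENNReal.ofReal_pos.2 hr) hRt).ne'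
      have hRnt : R ^ ((n:ℕ):ℝ) ≠ ⊤ := ENNReal.rpow_ne_top_of_nonneg (by positivity) hRt
      rw [hball, ENNReal.mul_inv (Or.inl hRn0) (Or.inl hRnt), ← ENNReal.rpow_neg]
      have hmul : C * (3 * r) ^ ((n:ℝ) - s * p)
          = (C * 3 ^ ((n:ℝ) - s * p)) * r ^ ((n:ℝ) - s * p) := by
        rw [Real.mul_rpow (by norm_num) hr.le]; ring
      rw [hmul, ENNReal.ofReal_mul (by positivity), ← ENNReal.ofReal_rpow_of_pos hr, ← hR]
      rw [show (-(s * p)) = -((n:ℕ):ℝ) + ((n:ℝ) - s * p) by push_cast; ring,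
        ENNReal.rpow_add _ _ hR0 hRt]
      ring
    have hLHS : ((volume (ball x r))⁻¹ *
        ∫⁻ y in ball x r, (ENNReal.ofReal (infDist y F)) ^ (-(s * p))) ^ (1 / p)
        ≤ K2 * R ^ (-s) := by
      have h1 : (volume (ball x r))⁻¹ *
          ∫⁻ y in ball x r, (ENNReal.ofReal (infDist y F)) ^ (-(s * p))
          ≤ ω⁻¹ * ENNReal.ofReal (C * 3 ^ ((n:ℝ) - s * p)) * R ^ (-(s * p)) := by
        rw [← harith]; exact mul_le_mul_right hIf _
      calc ((volume (ball x r))⁻¹ *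
          ∫⁻ y in ball x r, (ENNReal.ofReal (infDist y F)) ^ (-(s * p))) ^ (1 / p)
          ≤ (ω⁻¹ * ENNReal.ofReal (C * 3 ^ ((n:ℝ) - s * p)) * R ^ (-(s * p))) ^ (1 / p) :=
            ENNReal.rpow_le_rpow h1 (by positivity)
        _ = K2 * R ^ (-s) := by
            rw [ENNReal.mul_rpow_of_nonneg _ _ (by positivity : (0:ℝ) ≤ 1 / p), hK2,
              ← ENNReal.rpow_mul]
            congr 2
            field_simp
    have hgM : ∀ y ∈ ball x r, infDist y F ≤ 3 * r := by
      intro y hy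
      have h1 : infDist y F ≤ infDist x F + dist y x := infDist_le_infDist_add_dist
      have h2 : dist y x < r := mem_ball.1 hy
      linarith
    have h3r : (ENNReal.ofReal (3 * r)) ^ (-s) = oR3 ^ (-s) * R ^ (-s) := by
      rw [ENNReal.ofReal_mul (by norm_num : (0:ℝ) ≤ 3),
        ENNReal.mul_rpow_of_ne_top h3t hRt, hoR3, hR]
    calc ((volume (ball x r))⁻¹ *
        ∫⁻ y in ball x r, (ENNReal.ofReal (infDist y F)) ^ (-(s * p))) ^ (1 / p)
        ≤ K2 * R ^ (-s) := hLHS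
      _ = (oR3 ^ s * K2) * (oR3 ^ (-s) * R ^ (-s)) := by
          rw [show (oR3 ^ s * K2) * (oR3 ^ (-s) * R ^ (-s))
              = (oR3 ^ s * oR3 ^ (-s)) * (K2 * R ^ (-s)) by ring,
            aux_cancel h30 h3t s, one_mul]
      _ ≤ K * ((ENNReal.ofReal (3 * r)) ^ (-s)) := by
          rw [h3r]
          exact mul_le_mul' (mul_le_mul_right (le_max_right 1 K2) _) le_rfl
      _ ≤ K * ((volume (ball x r))⁻¹ *
            ∫⁻ y in ball x r, (ENNReal.ofReal (infDist y F)) ^ (-s)) :=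
          mul_le_mul_right (havg_lower (3 * r) hgM) _
  · -- far from the boundary: both sides comparable to (infDist x F) powers
    push_neg at hcase
    set D := infDist x F with hD
    have ha : 0 < D - r := by linarith
    have hfy : ∀ y ∈ ball x r,
        (ENNReal.ofReal (infDist y F)) ^ (-(s * p)) ≤ (ENNReal.ofReal (D - r)) ^ (-(s * p)) := by
      intro y hy
      refine aux_anti (ENNReal.ofReal_le_ofReal ?_) (by positivity)
      have h1 : infDist x F ≤ infDist y F + dist x y := infDist_le_infDist_add_dist
      have h2 : dist y x < r := mem_ball.1 hy
      rw [dist_comm] at h1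
      linarith
    have havgf : (volume (ball x r))⁻¹ *
        ∫⁻ y in ball x r, (ENNReal.ofReal (infDist y F)) ^ (-(s * p))
        ≤ (ENNReal.ofReal (D - r)) ^ (-(s * p)) := by
      have hint : ∫⁻ y in ball x r, (ENNReal.ofReal (infDist y F)) ^ (-(s * p))
          ≤ (ENNReal.ofReal (D - r)) ^ (-(s * p)) * volume (ball x r) := by
        rw [← setLIntegral_const]
        exact setLIntegral_mono' measurableSet_ball hfy
      calc (volume (ball x r))⁻¹ *
          ∫⁻ y in ball x r, (ENNReal.ofReal (infDist y F)) ^ (-(s * p))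
          ≤ (volume (ball x r))⁻¹ *
            ((ENNReal.ofReal (D - r)) ^ (-(s * p)) * volume (ball x r)) :=
            mul_le_mul_right hint _
        _ = (ENNReal.ofReal (D - r)) ^ (-(s * p)) := by
            rw [mul_comm ((ENNReal.ofReal (D - r)) ^ (-(s * p))) (volume (ball x r)),
              ← mul_assoc, ENNReal.inv_mul_cancel hV0 hVt, one_mul]
    have hLHS : ((volume (ball x r))⁻¹ *
        ∫⁻ y in ball x r, (ENNReal.ofReal (infDist y F)) ^ (-(s * p))) ^ (1 / p)
        ≤ (ENNReal.ofReal (D - r)) ^ (-s) := by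
      calc ((volume (ball x r))⁻¹ *
          ∫⁻ y in ball x r, (ENNReal.ofReal (infDist y F)) ^ (-(s * p))) ^ (1 / p)
          ≤ ((ENNReal.ofReal (D - r)) ^ (-(s * p))) ^ (1 / p) :=
            ENNReal.rpow_le_rpow havgf (by positivity)
        _ = (ENNReal.ofReal (D - r)) ^ (-s) := by
            rw [← ENNReal.rpow_mul]
            congr 1
            field_simp
    have hgM : ∀ y ∈ ball x r, infDist y F ≤ 3 * (D - r) := by
      intro y hy
      have h1 : infDist y F ≤ infDist x F + dist y x := infDist_le_infDist_add_dist
      have h2 : dist y x < r := mem_ball.1 hy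
      linarith
    have h3a : (ENNReal.ofReal (3 * (D - r))) ^ (-s)
        = oR3 ^ (-s) * (ENNReal.ofReal (D - r)) ^ (-s) := by
      rw [ENNReal.ofReal_mul (by norm_num : (0:ℝ) ≤ 3),
        ENNReal.mul_rpow_of_ne_top h3t ENNReal.ofReal_ne_top, hoR3]
    calc ((volume (ball x r))⁻¹ *
        ∫⁻ y in ball x r, (ENNReal.ofReal (infDist y F)) ^ (-(s * p))) ^ (1 / p)
        ≤ (ENNReal.ofReal (D - r)) ^ (-s) := hLHS
      _ = oR3 ^ s * ((ENNReal.ofReal (3 * (D - r))) ^ (-s)) := by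
          rw [h3a, ← mul_assoc, aux_cancel h30 h3t s, one_mul]
      _ ≤ K * ((ENNReal.ofReal (3 * (D - r))) ^ (-s)) := mul_le_mul_left hKs _
      _ ≤ K * ((volume (ball x r))⁻¹ *
            ∫⁻ y in ball x r, (ENNReal.ofReal (infDist y F)) ^ (-s)) :=
          mul_le_mul_right (havg_lower (3 * (D - r)) hgM) _
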